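/- For every integer k ≥ 0 and every n ≥ 0, S_k(n) equals the number of pairs (w,c) where w : {0,…,n−1} → ℤ² is a walk with each step w(i) in {(1,0),(0,1),(−1,0),(0,−1),(1,−1),(−1,1),(0,0)}, every partial sum p_m = Σ_{i<m} w(i) (0 ≤ m ≤ n) lies in the quadrant {(x,y) ∈ ℤ² : x ≥ 0, y ≥ 0}, the total sum p_n = (0,0), and c assigns to each index i with w(i) = (0,0) a colour in {1,…,k}. -/

import Mathlib

open scoped BigOperators

/-- The Laurent monomial `xᵃyᵇ` in `ℤ[x,x⁻¹,y,y⁻¹]`. -/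
noncomputable def mono (a b : ℤ) : AddMonoidAlgebra ℤ (ℤ × ℤ) := AddMonoidAlgebra.single (a, b) 1

/-- `K_k = k + x + y + x⁻¹ + y⁻¹ + xy⁻¹ + yx⁻¹`. -/
noncomputable def Kq (k : ℕ) : AddMonoidAlgebra ℤ (ℤ × ℤ) :=
  AddMonoidAlgebra.single (0, 0) (k : ℤ)
  + mono 1 0 + mono 0 1 + mono (-1) 0 + mono 0 (-1) + mono 1 (-1) + mono (-1) 1

/-- `W = 1 − x²y⁻¹ + x³ − x²y² + y³ − y²x⁻¹`. -/
noncomputable def Wq : AddMonoidAlgebra ℤ (ℤ × ℤ) :=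
  mono 0 0 - mono 2 (-1) + mono 3 0 - mono 2 2 + mono 0 3 - mono (-1) 2

/-- `S_k(n)` is the constant term (coefficient of `x⁰y⁰`) of `W·K_kⁿ`. -/
noncomputable def Sq (k : ℕ) (n : ℕ) : ℤ := (Wq * Kq k ^ n).coeff (0, 0)

/-- The `m`-th partial sum `p_m = Σ_{i<m} w(i)` of a walk `w : Fin n → ℤ²`. -/
def partialSum {n : ℕ} (w : Fin n → ℤ × ℤ) (m : ℕ) : ℤ × ℤ :=
  ∑ i ∈ Finset.univ.filter (fun i : Fin n => (i : ℕ) < m), w i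

/-- A quadrant walk of length `n` from `(0,0)` to `(0,0)`: steps in
`{(1,0),(0,1),(−1,0),(0,−1),(1,−1),(−1,1),(0,0)}`, all partial sums in the quadrant
`{(x,y) : x ≥ 0, y ≥ 0}`, and total sum `(0,0)`. -/
def IsQuadrantWalk {n : ℕ} (w : Fin n → ℤ × ℤ) : Prop :=
  (∀ i, w i ∈ ({(1, 0), (0, 1), (-1, 0), (0, -1), (1, -1), (-1, 1), (0, 0)} : Set (ℤ × ℤ))) ∧
  (∀ m ≤ n, (partialSum w m).1 ≥ 0 ∧ (partialSum w m).2 ≥ 0) ∧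
  partialSum w n = (0, 0)

section Aux

noncomputable def F (k n : ℕ) (a b : ℤ) : ℤ := (Kq k ^ n).coeff (a, b)

lemma ama_add_apply (f g : AddMonoidAlgebra ℤ (ℤ × ℤ)) (p : ℤ × ℤ) : (f + g).coeff p = f.coeff p + g.coeff p :=
  Finsupp.add_apply f.coeff g.coeff p

lemma F_zero (k : ℕ) (a b : ℤ) : F k 0 a b = if a = 0 ∧ b = 0 then 1 else 0 := by
  simp only [F, pow_zero, AddMonoidAlgebra.one_def, AddMonoidAlgebra.coeff_single, Finsupp.single_apply]
  simp [Prod.ext_iff, eq_comm]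

lemma F_succ (k n : ℕ) (a b : ℤ) :
    F k (n+1) a b = F k n (a-1) b + F k n a (b-1) + F k n (a+1) b + F k n a (b+1)
      + F k n (a-1) (b+1) + F k n (a+1) (b-1) + (k:ℤ) * F k n a b := by
  simp only [F, pow_succ, Kq, mono]
  simp only [mul_add, add_mul, ama_add_apply, AddMonoidAlgebra.coeff_mul_single_apply,
    AddMonoidAlgebra.coeff_single_mul_apply, AddMonoidAlgebra.coeff_single_zero_mul,
    Prod.mk_sub_mk, Prod.mk_add_mk, Prod.neg_mk]
  norm_num
  ring

def r1 : ℤ × ℤ ≃+ ℤ × ℤ where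
  toFun p := (-p.1, p.1 + p.2)
  invFun p := (-p.1, p.1 + p.2)
  left_inv p := by obtain ⟨a, b⟩ := p; simp [Prod.ext_iff, and_true, true_and] <;> try (constructor <;> ring)
  right_inv p := by obtain ⟨a, b⟩ := p; simp [Prod.ext_iff, and_true, true_and] <;> try (constructor <;> ring)
  map_add' p q := by obtain ⟨a, b⟩ := p; obtain ⟨c, d⟩ := q; simp [Prod.ext_iff, and_true, true_and] <;> try (constructor <;> ring)

def r2 : ℤ × ℤ ≃+ ℤ × ℤ where
  toFun p := (p.1 + p.2, -p.2)
  invFun p := (p.1 + p.2, -p.2)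
  left_inv p := by obtain ⟨a, b⟩ := p; simp [Prod.ext_iff, and_true, true_and] <;> try (constructor <;> ring)
  right_inv p := by obtain ⟨a, b⟩ := p; simp [Prod.ext_iff, and_true, true_and] <;> try (constructor <;> ring)
  map_add' p q := by obtain ⟨a, b⟩ := p; obtain ⟨c, d⟩ := q; simp [Prod.ext_iff, and_true, true_and] <;> try (constructor <;> ring)

@[simp] lemma r1_apply (a b : ℤ) : r1 (a, b) = (-a, a + b) := rfl
@[simp] lemma r2_apply (a b : ℤ) : r2 (a, b) = (a + b, -b) := rfl

lemma F_equiv (k : ℕ) (e : ℤ × ℤ ≃+ ℤ × ℤ)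
    (he : AddMonoidAlgebra.domCongr ℤ ℤ e (Kq k) = Kq k) (n : ℕ) (p : ℤ × ℤ) :
    (Kq k ^ n).coeff (e p) = (Kq k ^ n).coeff p := by
  have h : AddMonoidAlgebra.domCongr ℤ ℤ e (Kq k ^ n) = Kq k ^ n := by
    rw [map_pow, he]
  conv_lhs => rw [← h]
  rw [AddMonoidAlgebra.coeff_domCongr, AddEquiv.symm_apply_apply]

lemma Kq_r1 (k : ℕ) : AddMonoidAlgebra.domCongr ℤ ℤ r1 (Kq k) = Kq k := by
  simp only [Kq, mono, map_add, AddMonoidAlgebra.domCongr_single]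
  norm_num
  abel

lemma Kq_r2 (k : ℕ) : AddMonoidAlgebra.domCongr ℤ ℤ r2 (Kq k) = Kq k := by
  simp only [Kq, mono, map_add, AddMonoidAlgebra.domCongr_single]
  norm_num
  abel

lemma Kq_neg (k : ℕ) : AddMonoidAlgebra.domCongr ℤ ℤ (AddEquiv.neg (ℤ × ℤ)) (Kq k) = Kq k := by
  simp only [Kq, mono, map_add, AddMonoidAlgebra.domCongr_single, AddEquiv.neg_apply, Prod.neg_mk]
  norm_num
  abel

lemma F_r1 (k n : ℕ) (a b : ℤ) : F k n (-a) (a + b) = F k n a b :=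
  F_equiv k r1 (Kq_r1 k) n (a, b)

lemma F_r2 (k n : ℕ) (a b : ℤ) : F k n (a + b) (-b) = F k n a b :=
  F_equiv k r2 (Kq_r2 k) n (a, b)

lemma F_neg (k n : ℕ) (a b : ℤ) : F k n (-a) (-b) = F k n a b := by
  have := F_equiv k (AddEquiv.neg (ℤ × ℤ)) (Kq_neg k) n (a, b)
  simpa [F, AddEquiv.neg_apply, Prod.neg_mk] using this

noncomputable def T (k n : ℕ) (a b : ℤ) : ℤ :=
  F k n (a-1) (b-1) - F k n (a+1) (b-2) - F k n (a-2) (b+1)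
  + F k n (a+2) (b-1) + F k n (a-1) (b+2) - F k n (a+1) (b+1)

lemma T_wall1 (k n : ℕ) (b : ℤ) : T k n 0 b = 0 := by
  have e1 : T k n 0 b = F k n (-1) (b-1) - F k n 1 (b-2) - F k n (-2) (b+1)
      + F k n 2 (b-1) + F k n (-1) (b+2) - F k n 1 (b+1) := by unfold T; norm_num
  have h1 : F k n (-1) (b-1) = F k n 1 (b-2) := by
    have := F_r1 k n 1 (b-2); convert this using 2 <;> ring
  have h2 : F k n (-2) (b+1) = F k n 2 (b-1) := by
    have := F_r1 k n 2 (b-1); convert this using 2 <;> ring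
  have h3 : F k n (-1) (b+2) = F k n 1 (b+1) := by
    have := F_r1 k n 1 (b+1); convert this using 2 <;> ring
  rw [e1, h1, h2, h3]; ring

lemma T_wall2 (k n : ℕ) (a : ℤ) : T k n a 0 = 0 := by
  have e1 : T k n a 0 = F k n (a-1) (-1) - F k n (a+1) (-2) - F k n (a-2) 1
      + F k n (a+2) (-1) + F k n (a-1) 2 - F k n (a+1) 1 := by unfold T; norm_num
  have h1 : F k n (a-1) (-1) = F k n (a-2) 1 := by
    have := F_r2 k n (a-2) 1; convert this using 2 <;> ring
  have h2 : F k n (a+1) (-2) = F k n (a-1) 2 := by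
    have := F_r2 k n (a-1) 2; convert this using 2 <;> ring
  have h3 : F k n (a+2) (-1) = F k n (a+1) 1 := by
    have := F_r2 k n (a+1) 1; convert this using 2 <;> ring
  rw [e1, h1, h2, h3]; ring

lemma T_succ (k n : ℕ) (a b : ℤ) :
    T k (n+1) a b = T k n (a-1) b + T k n a (b-1) + T k n (a+1) b + T k n a (b+1)
      + T k n (a-1) (b+1) + T k n (a+1) (b-1) + (k:ℤ) * T k n a b := by
  unfold T
  simp only [F_succ]
  ring_nf

lemma T_zero (k : ℕ) (a b : ℤ) (ha : 0 ≤ a) (hb : 0 ≤ b) :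
    T k 0 (a+1) (b+1) = if a = 0 ∧ b = 0 then 1 else 0 := by
  unfold T
  simp only [F_zero]
  split_ifs <;> omega

def Qr (k : ℕ) : ℕ → ℤ → ℤ → ℕ
  | 0, a, b => if a = 0 ∧ b = 0 then 1 else 0
  | n+1, a, b => if 0 ≤ a ∧ 0 ≤ b then
      Qr k n (a-1) b + Qr k n a (b-1) + Qr k n (a+1) b + Qr k n a (b+1)
      + Qr k n (a-1) (b+1) + Qr k n (a+1) (b-1) + k * Qr k n a b else 0

lemma Qr_neg (k n : ℕ) (a b : ℤ) (h : a < 0 ∨ b < 0) : Qr k n a b = 0 := by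
  cases n with
  | zero => rw [Qr]; rw [if_neg]; omega
  | succ n => rw [Qr]; rw [if_neg]; omega

lemma T_eq_Qr (k : ℕ) : ∀ n (a b : ℤ), 0 ≤ a → 0 ≤ b → T k n (a+1) (b+1) = (Qr k n a b : ℤ) := by
  intro n
  induction n with
  | zero =>
    intro a b ha hb
    rw [T_zero k a b ha hb, Qr]
    split_ifs <;> simp
  | succ n IH =>
    intro a b ha hb
    have key : ∀ x y : ℤ, 0 ≤ x + 1 → 0 ≤ y + 1 →
        T k n (x+1) (y+1) = (Qr k n x y : ℤ) := by
      intro x y hx hy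
      rcases lt_or_ge x 0 with h | h
      · have hx0 : x = -1 := by omega
        subst hx0
        norm_num [T_wall1, Qr_neg k n (-1) y (by omega)]
      · rcases lt_or_ge y 0 with h' | h'
        · have hy0 : y = -1 := by omega
          subst hy0
          norm_num [T_wall2, Qr_neg k n x (-1) (by omega)]
        · exact IH x y h h'
    rw [T_succ]
    have e1 : T k n (a+1-1) (b+1) = (Qr k n (a-1) b : ℤ) := by
      rw [show a+1-1 = (a-1)+1 by ring]; exact key (a-1) b (by omega) (by omega)
    have e2 : T k n (a+1) (b+1-1) = (Qr k n a (b-1) : ℤ) := by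
      rw [show b+1-1 = (b-1)+1 by ring]; exact key a (b-1) (by omega) (by omega)
    have e3 : T k n (a+1+1) (b+1) = (Qr k n (a+1) b : ℤ) :=
      key (a+1) b (by omega) (by omega)
    have e4 : T k n (a+1) (b+1+1) = (Qr k n a (b+1) : ℤ) :=
      key a (b+1) (by omega) (by omega)
    have e5 : T k n (a+1-1) (b+1+1) = (Qr k n (a-1) (b+1) : ℤ) := by
      rw [show a+1-1 = (a-1)+1 by ring]; exact key (a-1) (b+1) (by omega) (by omega)
    have e6 : T k n (a+1+1) (b+1-1) = (Qr k n (a+1) (b-1) : ℤ) := by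
      rw [show b+1-1 = (b-1)+1 by ring]; exact key (a+1) (b-1) (by omega) (by omega)
    have e7 : T k n (a+1) (b+1) = (Qr k n a b : ℤ) := key a b (by omega) (by omega)
    rw [e1, e2, e3, e4, e5, e6, e7, Qr, if_pos ⟨ha, hb⟩]
    push_cast
    ring

lemma ama_sub_apply (f g : AddMonoidAlgebra ℤ (ℤ × ℤ)) (p : ℤ × ℤ) : (f - g).coeff p = f.coeff p - g.coeff p :=
  Finsupp.sub_apply f.coeff g.coeff p

lemma F_def (k n : ℕ) (a b : ℤ) : (Kq k ^ n).coeff (a, b) = F k n a b := rfl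
lemma F_def0 (k n : ℕ) : (Kq k ^ n).coeff (0 : ℤ × ℤ) = F k n 0 0 := rfl

lemma Sq_eq_T (k n : ℕ) : Sq k n = T k n 1 1 := by
  have : Sq k n = F k n 0 0 - F k n (-2) 1 + F k n (-3) 0 - F k n (-2) (-2)
      + F k n 0 (-3) - F k n 1 (-2) := by
    unfold Sq Wq mono
    simp only [sub_mul, add_mul, ama_add_apply, ama_sub_apply,
      AddMonoidAlgebra.coeff_single_mul_apply, Prod.neg_mk, Prod.mk_add_mk, one_mul]
    norm_num [F_def, F_def0]
  rw [this]
  have h1 : F k n (-2) 1 = F k n 2 (-1) := by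
    have := F_neg k n 2 (-1); convert this using 3 <;> norm_num
  have h2 : F k n (-3) 0 = F k n 3 0 := by
    have := F_neg k n 3 0; convert this using 3 <;> norm_num
  have h3 : F k n (-2) (-2) = F k n 2 2 := by
    have := F_neg k n 2 2; convert this using 3 <;> norm_num
  have h4 : F k n 0 (-3) = F k n 0 3 := by
    have := F_neg k n 0 3; convert this using 3 <;> norm_num
  have h5 : F k n 1 (-2) = F k n (-1) 2 := by
    have := F_neg k n (-1) 2; convert this using 3 <;> norm_num
  rw [h1, h2, h3, h4, h5]
  unfold T
  norm_num
  ring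

lemma partialSum_zero {n : ℕ} (w : Fin n → ℤ × ℤ) : partialSum w 0 = 0 := by
  simp [partialSum]

lemma partialSum_snoc {n : ℕ} (w : Fin n → ℤ × ℤ) (s : ℤ × ℤ) {m : ℕ} (hm : m ≤ n) :
    partialSum (Fin.snoc w s) m = partialSum w m := by
  unfold partialSum
  rw [show (Finset.univ.filter fun i : Fin (n+1) => (i : ℕ) < m)
      = (Finset.univ.filter fun i : Fin n => (i : ℕ) < m).map
        ⟨Fin.castSucc, Fin.castSucc_injective n⟩ by
    ext i
    simp only [Finset.mem_filter, Finset.mem_univ, true_and, Finset.mem_map,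
      Function.Embedding.coeFn_mk]
    constructor
    · intro hi
      exact ⟨⟨(i : ℕ), by omega⟩, by simpa using hi, by ext; simp⟩
    · rintro ⟨j, hj, rfl⟩
      simpa using hj]
  rw [Finset.sum_map]
  simp [Fin.snoc_castSucc]

lemma partialSum_snoc_top {n : ℕ} (w : Fin n → ℤ × ℤ) (s : ℤ × ℤ) :
    partialSum (Fin.snoc w s) (n + 1) = partialSum w n + s := by
  unfold partialSum
  rw [show (Finset.univ.filter fun i : Fin (n+1) => (i : ℕ) < n + 1) = Finset.univ by
    ext i; simp [i.isLt]; omega]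
  rw [show (Finset.univ.filter fun i : Fin n => (i : ℕ) < n) = Finset.univ by
    ext i; simp [i.isLt]]
  rw [Fin.sum_univ_castSucc]
  simp [Fin.snoc_castSucc]

def st (k : ℕ) : Fin 6 ⊕ Fin k → ℤ × ℤ
  | .inl ⟨0, _⟩ => (1, 0)
  | .inl ⟨1, _⟩ => (0, 1)
  | .inl ⟨2, _⟩ => (-1, 0)
  | .inl ⟨3, _⟩ => (0, -1)
  | .inl ⟨4, _⟩ => (1, -1)
  | .inl ⟨5, _⟩ => (-1, 1)
  | .inr _ => (0, 0)

@[simp] lemma st_inl0 (k : ℕ) : st k (.inl 0) = (1, 0) := rfl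
@[simp] lemma st_inl1 (k : ℕ) : st k (.inl 1) = (0, 1) := rfl
@[simp] lemma st_inl2 (k : ℕ) : st k (.inl 2) = (-1, 0) := rfl
@[simp] lemma st_inl3 (k : ℕ) : st k (.inl 3) = (0, -1) := rfl
@[simp] lemma st_inl4 (k : ℕ) : st k (.inl 4) = (1, -1) := rfl
@[simp] lemma st_inl5 (k : ℕ) : st k (.inl 5) = (-1, 1) := rfl
@[simp] lemma st_inr (k : ℕ) (j : Fin k) : st k (.inr j) = (0, 0) := rfl

def P (k n : ℕ) (a b : ℤ) (v : Fin n → Fin 6 ⊕ Fin k) : Prop :=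
  (∀ m ≤ n, 0 ≤ (partialSum (fun i => st k (v i)) m).1
      ∧ 0 ≤ (partialSum (fun i => st k (v i)) m).2)
  ∧ partialSum (fun i => st k (v i)) n = (a, b)

lemma nat_card_sigma {ι : Type*} [Fintype ι] (f : ι → Type*) [∀ i, Finite (f i)] :
    Nat.card (Σ i, f i) = ∑ i, Nat.card (f i) := by
  letI : ∀ i, Fintype (f i) := fun i => Fintype.ofFinite (f i)
  simp [Nat.card_eq_fintype_card, Fintype.card_sigma]

lemma P_snoc_iff (k n : ℕ) (a b : ℤ) (v : Fin n → Fin 6 ⊕ Fin k) (s : Fin 6 ⊕ Fin k) :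
    P k (n+1) a b (Fin.snoc v s) ↔
      (0 ≤ a ∧ 0 ≤ b) ∧ P k n (a - (st k s).1) (b - (st k s).2) v := by
  have hc : (fun i : Fin (n+1) => st k ((Fin.snoc v s : Fin (n+1) → Fin 6 ⊕ Fin k) i)) = (Fin.snoc (fun i => st k (v i)) (st k s) : Fin (n+1) → ℤ × ℤ) := by
    funext i
    induction i using Fin.lastCases with
    | last => simp
    | cast j => simp
  constructor
  · rintro ⟨h1, h2⟩
    rw [hc] at h1 h2
    rw [partialSum_snoc_top] at h2
    have hend : partialSum (fun i => st k (v i)) n = (a - (st k s).1, b - (st k s).2) := by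
      have := congrArg Prod.fst h2
      have := congrArg Prod.snd h2
      simp only [Prod.fst_add, Prod.snd_add] at *
      ext <;> simp <;> omega
    refine ⟨?_, fun m hm => ?_, hend⟩
    · have := h1 (n+1) le_rfl
      rw [partialSum_snoc_top, h2] at this
      simpa using this
    · have := h1 m (by omega)
      rwa [partialSum_snoc (hm := hm)] at this
  · rintro ⟨⟨ha, hb⟩, h1, h2⟩
    constructor
    · intro m hm
      rw [hc]
      rcases Nat.lt_or_ge m (n+1) with h | h
      · rw [partialSum_snoc (hm := by omega)]
        exact h1 m (by omega)
      · have hm1 : m = n + 1 := by omega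
        subst hm1
        rw [partialSum_snoc_top, h2]
        constructor <;> simp <;> omega
    · rw [hc, partialSum_snoc_top, h2]
      ext <;> simp <;> omega

lemma card_P (k : ℕ) : ∀ n (a b : ℤ),
    Nat.card {v : Fin n → Fin 6 ⊕ Fin k // P k n a b v} = Qr k n a b := by
  intro n
  induction n with
  | zero =>
    intro a b
    by_cases h : a = 0 ∧ b = 0
    · obtain ⟨rfl, rfl⟩ := h
      rw [Qr, if_pos ⟨rfl, rfl⟩, Nat.card_eq_one_iff_unique]
      constructor
      · constructor
        rintro ⟨v, _⟩ ⟨v', _⟩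
        refine Subtype.ext (funext fun i => i.elim0)
      · refine ⟨⟨fun i => i.elim0, fun m hm => ?_, ?_⟩⟩
        · interval_cases m
          simp [partialSum_zero]
        · simp [partialSum_zero, Prod.ext_iff]
    · have : IsEmpty {v : Fin 0 → Fin 6 ⊕ Fin k // P k 0 a b v} := by
        constructor
        rintro ⟨v, _, hend⟩
        rw [partialSum_zero] at hend
        apply h
        constructor <;> [exact (congrArg Prod.fst hend).symm; exact (congrArg Prod.snd hend).symm]
      rw [Nat.card_of_isEmpty, Qr, if_neg h]
  | succ n IH =>
    intro a b
    by_cases hab : 0 ≤ a ∧ 0 ≤ b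
    · have E : {v : Fin (n+1) → Fin 6 ⊕ Fin k // P k (n+1) a b v} ≃
          Σ s : Fin 6 ⊕ Fin k,
            {v : Fin n → Fin 6 ⊕ Fin k // P k n (a - (st k s).1) (b - (st k s).2) v} := by
        refine ⟨fun u => ⟨u.1 (Fin.last n), ⟨Fin.init u.1, ?_⟩⟩,
          fun x => ⟨Fin.snoc x.2.1 x.1, (P_snoc_iff k n a b x.2.1 x.1).mpr ⟨hab, x.2.2⟩⟩,
          fun u => Subtype.ext (Fin.snoc_init_self u.1), fun x => ?_⟩
        · have h := u.2
          rw [← Fin.snoc_init_self u.1] at h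
          exact ((P_snoc_iff k n a b (Fin.init u.1) (u.1 (Fin.last n))).mp h).2
        · refine Sigma.subtype_ext ?_ ?_
          · simp
          · simp
      rw [Nat.card_congr E, nat_card_sigma, Fintype.sum_sum_type]
      simp only [IH]
      rw [Qr, if_pos hab]
      rw [Fin.sum_univ_six]
      simp only [st_inl0, st_inl1, st_inl2, st_inl3, st_inl4, st_inl5, st_inr]
      simp only [Finset.sum_const, Finset.card_univ, Fintype.card_fin, smul_eq_mul]
      norm_num
      try ring
    · have : IsEmpty {v : Fin (n+1) → Fin 6 ⊕ Fin k // P k (n+1) a b v} := by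
        constructor
        rintro ⟨v, hcond, hend⟩
        have := hcond (n+1) le_rfl
        rw [hend] at this
        exact hab this
      rw [Nat.card_of_isEmpty, Qr, if_neg hab]

lemma st_inl_ne (k : ℕ) (j : Fin 6) : st k (.inl j) ≠ (0, 0) := by
  fin_cases j <;> simp [st]

def extract {k : ℕ} : (s : Fin 6 ⊕ Fin k) → st k s = (0, 0) → Fin k
  | .inr j, _ => j
  | .inl j, h => absurd h (st_inl_ne k j)

def idx : ℤ × ℤ → Fin 6 := fun p =>
  if p = (1, 0) then 0 else if p = (0, 1) then 1 else if p = (-1, 0) then 2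
  else if p = (0, -1) then 3 else if p = (1, -1) then 4 else 5

lemma extract_spec {k : ℕ} (s : Fin 6 ⊕ Fin k) (h : st k s = (0, 0)) :
    Sum.inr (extract s h) = s := by
  cases s with
  | inl j => exact absurd h (st_inl_ne k j)
  | inr j => rfl

lemma idx_st (k : ℕ) (j : Fin 6) : idx (st k (.inl j)) = j := by
  fin_cases j <;> simp [st, idx]

lemma st_mem (k : ℕ) (s : Fin 6 ⊕ Fin k) :
    st k s ∈ ({(1, 0), (0, 1), (-1, 0), (0, -1), (1, -1), (-1, 1), (0, 0)} : Set (ℤ × ℤ)) := by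
  cases s with
  | inl j => fin_cases j <;> simp [st]
  | inr j => simp [st]

lemma st_idx (k : ℕ) {p : ℤ × ℤ}
    (hp : p ∈ ({(1, 0), (0, 1), (-1, 0), (0, -1), (1, -1), (-1, 1), (0, 0)} : Set (ℤ × ℤ)))
    (hne : p ≠ (0, 0)) : st k (.inl (idx p)) = p := by
  simp only [Set.mem_insert_iff, Set.mem_singleton_iff] at hp
  rcases hp with rfl | rfl | rfl | rfl | rfl | rfl | rfl <;> simp [idx, st] <;> exact absurd rfl hne

/-- Encoding of a coloured walk as a word. -/
def encode {k n : ℕ}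
    (x : (w : {w : Fin n → ℤ × ℤ // IsQuadrantWalk w}) × ({i : Fin n // w.1 i = (0, 0)} → Fin k)) :
    Fin n → Fin 6 ⊕ Fin k :=
  fun i => if h : x.1.1 i = (0, 0) then Sum.inr (x.2 ⟨i, h⟩) else Sum.inl (idx (x.1.1 i))

lemma st_encode {k n : ℕ}
    (x : (w : {w : Fin n → ℤ × ℤ // IsQuadrantWalk w}) × ({i : Fin n // w.1 i = (0, 0)} → Fin k)) :
    (fun i => st k (encode x i)) = x.1.1 := by
  funext i
  unfold encode
  by_cases h : x.1.1 i = (0, 0)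
  · simp [h, st]
  · simp only [dif_neg h]
    exact st_idx k (x.1.2.1 i) h

lemma card_walks (k n : ℕ) :
    Nat.card ((w : {w : Fin n → ℤ × ℤ // IsQuadrantWalk w}) ×
      ({i : Fin n // w.1 i = (0, 0)} → Fin k))
    = Nat.card {v : Fin n → Fin 6 ⊕ Fin k // P k n 0 0 v} := by
  have := Fintype.ofFinite (Fin n → Fin 6 ⊕ Fin k)
  refine Nat.card_eq_of_bijective (fun x => ⟨encode x, ?_⟩) ⟨?_, ?_⟩
  · -- encode satisfies P
    obtain ⟨⟨w, hw⟩, c⟩ := x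
    have hv := st_encode (k := k) ⟨⟨w, hw⟩, c⟩
    unfold P
    rw [hv]
    exact ⟨fun m hm => hw.2.1 m hm, hw.2.2⟩
  · -- injective
    rintro ⟨⟨w, hw⟩, c⟩ ⟨⟨w', hw'⟩, c'⟩ hxy
    have hv : encode (k := k) ⟨⟨w, hw⟩, c⟩ = encode ⟨⟨w', hw'⟩, c'⟩ := congrArg Subtype.val hxy
    have e1 : (fun i => st k (encode (k := k) ⟨⟨w, hw⟩, c⟩ i)) = w := st_encode _
    have e2 : (fun i => st k (encode (k := k) ⟨⟨w', hw'⟩, c'⟩ i)) = w' := st_encode _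
    have hww : w = w' := by rw [← e1, ← e2, hv]
    subst hww
    have hcc : c = c' := by
      funext ip
      obtain ⟨i, h⟩ := ip
      have := congrFun hv i
      unfold encode at this
      simp only [dif_pos h] at this
      exact Sum.inr.inj this
    subst hcc
    rfl
  · -- surjective
    rintro ⟨v, hv⟩
    have hq : IsQuadrantWalk (fun i => st k (v i)) := by
      exact ⟨fun i => st_mem k (v i), fun m hm => (hv.1 m hm : _), hv.2⟩
    refine ⟨⟨⟨fun i => st k (v i), hq⟩, fun ip => extract (v ip.1) ip.2⟩, ?_⟩
    apply Subtype.ext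
    funext i
    unfold encode
    by_cases h : st k (v i) = (0, 0)
    · simp only [dif_pos h]
      exact extract_spec (v i) h
    · simp only [dif_neg h]
      rcases hvi : v i with j | j
      · rw [idx_st]
      · exact absurd (hvi ▸ rfl : st k (v i) = (0, 0)) h

end Aux

/-- For every `k ≥ 0` and `n ≥ 0`, `S_k(n)` counts pairs `(w,c)` where `w` is a quadrant
walk of length `n` from the origin to the origin and `c` assigns one of `k` colours to
each zero step of `w`. -/
theorem Sq_eq_card_colouredQuadrantWalks (k n : ℕ) :
    Sq k n = (Nat.card ((w : {w : Fin n → ℤ × ℤ // IsQuadrantWalk w}) ×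
      ({i : Fin n // w.1 i = (0, 0)} → Fin k)) : ℤ) := by
  rw [card_walks k n, card_P k n 0 0, Sq_eq_T]
  have := T_eq_Qr k n 0 0 le_rfl le_rfl
  norm_num at this
  exact this
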